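/- Let f, g, h₁, h₂ be continuous on (0,a] with f(x) ∼ x^κ, g(x) ∼ μ x^{κ+1} (μ ≠ 0), h₁(x) = O(x^{κ+1}), h₂(x) = O(x^{κ+1}) as x → 0, κ ≥ 1/2, and set z(x) = ∫₀ˣ (h₁ f + h₂ g) dt. Then z(x)/(f(x) g(x)) → 0 as x → 0⁺. -/

import Mathlib

open Set Filter Topology intervalIntegral MeasureTheory Asymptotics

theorem z_over_fg_tendsto_zero (a κ : ℝ) (ha : 0 < a) (hκ : 1 / 2 ≤ κ) (μ : ℂ)
    (hμ : μ ≠ 0)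
    (f g h₁ h₂ z : ℝ → ℂ)
    (hfc : ContinuousOn f (Set.Ioc 0 a))
    (hgc : ContinuousOn g (Set.Ioc 0 a))
    (hfne : ∀ x ∈ Set.Ioc (0:ℝ) a, f x ≠ 0)
    (hgne : ∀ x ∈ Set.Ioc (0:ℝ) a, g x ≠ 0)
    (hfasym : Tendsto (fun x => f x / ((x ^ κ : ℝ) : ℂ)) (𝓝[>] (0:ℝ)) (𝓝 1))
    (hgasym : Tendsto (fun x => g x / ((x ^ (κ + 1) : ℝ) : ℂ)) (𝓝[>] (0:ℝ)) (𝓝 μ))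
    (hh₁ : ContinuousOn h₁ (Set.Icc 0 a))
    (hh₂ : ContinuousOn h₂ (Set.Icc 0 a))
    (hh₁O : h₁ =O[𝓝[>] (0:ℝ)] fun x => (x ^ (κ + 1) : ℝ))
    (hh₂O : h₂ =O[𝓝[>] (0:ℝ)] fun x => (x ^ (κ + 1) : ℝ))
    (hz : ∀ x ∈ Set.Ioc (0:ℝ) a,
      z x = ∫ t in (0:ℝ)..x, (h₁ t * f t + h₂ t * g t))
    (hint : ∀ x ∈ Set.Ioc (0:ℝ) a,
      IntervalIntegrable (fun t => h₁ t * f t + h₂ t * g t) volume 0 x) :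
    Tendsto (fun x => z x / (f x * g x)) (𝓝[>] (0:ℝ)) (𝓝 0) := by
  set p : ℝ := 2 * κ + 1 with hp
  have hp0 : 0 ≤ p := by simp only [hp]; linarith
  -- constants
  obtain ⟨C₁, hC₁⟩ := hh₁O.bound
  obtain ⟨C₂, hC₂⟩ := hh₂O.bound
  set D₁ : ℝ := max C₁ 0 with hD₁
  set D₂ : ℝ := max C₂ 0 with hD₂
  set M : ℝ := 2 * D₁ + (‖μ‖ + 1) * D₂ with hM
  have hM0 : 0 ≤ M := by positivity
  have hf2 : ∀ᶠ x in 𝓝[>] (0:ℝ), ‖f x / ((x ^ κ : ℝ) : ℂ)‖ ≤ 2 := by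
    have := hfasym.norm
    simp only [norm_one] at this
    exact this.eventually (ge_mem_nhds (by norm_num))
  have hg2 : ∀ᶠ x in 𝓝[>] (0:ℝ), ‖g x / ((x ^ (κ+1) : ℝ) : ℂ)‖ ≤ ‖μ‖ + 1 := by
    have := hgasym.norm
    exact this.eventually (ge_mem_nhds (by linarith))
  -- find δ
  have hE : ∀ᶠ x in 𝓝[>] (0:ℝ),
      ‖h₁ x‖ ≤ D₁ * x ^ (κ+1) ∧ ‖h₂ x‖ ≤ D₂ * x ^ (κ+1) ∧
      ‖f x‖ ≤ 2 * x ^ κ ∧ ‖g x‖ ≤ (‖μ‖ + 1) * x ^ (κ+1) := by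
    filter_upwards [hC₁, hC₂, hf2, hg2, self_mem_nhdsWithin] with x e1 e2 e3 e4 hx
    have hx0 : (0:ℝ) < x := hx
    have hxκ : (0:ℝ) < x ^ κ := Real.rpow_pos_of_pos hx0 κ
    have hxκ1 : (0:ℝ) < x ^ (κ+1) := Real.rpow_pos_of_pos hx0 (κ+1)
    have hnκ : ‖(x ^ (κ+1) : ℝ)‖ = x ^ (κ+1) := by
      rw [Real.norm_eq_abs, abs_of_pos hxκ1]
    refine ⟨?_, ?_, ?_, ?_⟩
    · calc ‖h₁ x‖ ≤ C₁ * ‖(x ^ (κ+1) : ℝ)‖ := e1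
        _ ≤ D₁ * x ^ (κ+1) := by rw [hnκ]; gcongr; exact le_max_left _ _
    · calc ‖h₂ x‖ ≤ C₂ * ‖(x ^ (κ+1) : ℝ)‖ := e2
        _ ≤ D₂ * x ^ (κ+1) := by rw [hnκ]; gcongr; exact le_max_left _ _
    · have : ‖f x‖ = ‖f x / ((x ^ κ : ℝ) : ℂ)‖ * x ^ κ := by
        rw [norm_div]
        rw [Complex.norm_real, Real.norm_eq_abs, abs_of_pos hxκ]
        field_simp
      rw [this]
      calc ‖f x / ((x ^ κ : ℝ) : ℂ)‖ * x ^ κ ≤ 2 * x ^ κ := by gcongr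
        _ = 2 * x ^ κ := rfl
    · have : ‖g x‖ = ‖g x / ((x ^ (κ+1) : ℝ) : ℂ)‖ * x ^ (κ+1) := by
        rw [norm_div, Complex.norm_real, Real.norm_eq_abs, abs_of_pos hxκ1]
        field_simp
      rw [this]; gcongr
  obtain ⟨δ₀, hδ₀, hsub⟩ := mem_nhdsGT_iff_exists_Ioc_subset.mp hE
  set δ : ℝ := min (min δ₀ a) 1 with hδdef
  have hδpos : 0 < δ := by
    simp only [hδdef, lt_min_iff]
    exact ⟨⟨hδ₀, ha⟩, one_pos⟩
  have hδa : δ ≤ a := le_trans (min_le_left _ _) (min_le_right _ _)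
  have hδ1 : δ ≤ 1 := min_le_right _ _
  have hδδ₀ : δ ≤ δ₀ := le_trans (min_le_left _ _) (min_le_left _ _)
  -- the key bound on z
  have hzbound : ∀ x ∈ Set.Ioc (0:ℝ) δ, ‖z x‖ ≤ M * x ^ p * x := by
    intro x hx
    have hxa : x ∈ Set.Ioc (0:ℝ) a := ⟨hx.1, hx.2.trans hδa⟩
    rw [hz x hxa]
    have key : ∀ t ∈ Set.uIoc (0:ℝ) x, ‖h₁ t * f t + h₂ t * g t‖ ≤ M * x ^ p := by
      intro t ht
      rw [Set.uIoc_of_le (le_of_lt hx.1)] at ht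
      have ht0 : 0 < t := ht.1
      have htx : t ≤ x := ht.2
      have htδ : t ∈ Set.Ioc (0:ℝ) δ₀ := ⟨ht0, htx.trans (hx.2.trans hδδ₀)⟩
      obtain ⟨e1, e2, e3, e4⟩ := hsub htδ
      have ht1 : t ≤ 1 := htx.trans (hx.2.trans hδ1)
      have hq1 : t ^ (κ+1) * t ^ κ = t ^ p := by
        rw [← Real.rpow_add ht0]; congr 1; ring
      have hq2 : t ^ (κ+1) * t ^ (κ+1) = t ^ p * t := by
        rw [show t ^ p * t = t ^ p * t ^ (1:ℝ) by rw [Real.rpow_one],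
          ← Real.rpow_add ht0, ← Real.rpow_add ht0]
        congr 1; simp only [hp]; ring
      have htp : t ^ p ≤ x ^ p := Real.rpow_le_rpow (le_of_lt ht0) htx hp0
      have htpt : t ^ p * t ≤ t ^ p := by
        nth_rewrite 2 [← mul_one (t ^ p)]
        gcongr
      calc ‖h₁ t * f t + h₂ t * g t‖ ≤ ‖h₁ t * f t‖ + ‖h₂ t * g t‖ := norm_add_le _ _
        _ = ‖h₁ t‖ * ‖f t‖ + ‖h₂ t‖ * ‖g t‖ := by rw [norm_mul, norm_mul]
        _ ≤ (D₁ * t ^ (κ+1)) * (2 * t ^ κ) + (D₂ * t ^ (κ+1)) * ((‖μ‖+1) * t ^ (κ+1)) := by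
            gcongr <;> positivity
        _ = 2 * D₁ * (t ^ (κ+1) * t ^ κ) + (‖μ‖+1) * D₂ * (t ^ (κ+1) * t ^ (κ+1)) := by ring
        _ = 2 * D₁ * t ^ p + (‖μ‖+1) * D₂ * (t ^ p * t) := by rw [hq1, hq2]
        _ ≤ 2 * D₁ * t ^ p + (‖μ‖+1) * D₂ * t ^ p := by gcongr
        _ = M * t ^ p := by ring
        _ ≤ M * x ^ p := by gcongr
    calc ‖∫ t in (0:ℝ)..x, (h₁ t * f t + h₂ t * g t)‖
        ≤ (M * x ^ p) * |x - 0| := intervalIntegral.norm_integral_le_of_norm_le_const key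
      _ = M * x ^ p * x := by rw [sub_zero, abs_of_pos hx.1]
  -- first limit: z x / x^p → 0
  have hA : Tendsto (fun x => z x / ((x ^ p : ℝ) : ℂ)) (𝓝[>] (0:ℝ)) (𝓝 0) := by
    rw [tendsto_zero_iff_norm_tendsto_zero]
    apply squeeze_zero' (Eventually.of_forall fun x => norm_nonneg _)
    · filter_upwards [Ioc_mem_nhdsGT hδpos] with x hx
      have hx0 : (0:ℝ) < x := hx.1
      have hxp : (0:ℝ) < x ^ p := Real.rpow_pos_of_pos hx0 p
      rw [norm_div, Complex.norm_real, Real.norm_eq_abs, abs_of_pos hxp,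
        div_le_iff₀ hxp]
      calc ‖z x‖ ≤ M * x ^ p * x := hzbound x hx
        _ = M * x * x ^ p := by ring
    · have : Tendsto (fun x : ℝ => M * x) (𝓝 (0:ℝ)) (𝓝 (M * 0)) :=
        (continuous_const.mul continuous_id).tendsto 0
      rw [mul_zero] at this
      exact this.mono_left nhdsWithin_le_nhds
  -- second limit: x^p / (f x * g x) → μ⁻¹
  have hB : Tendsto (fun x => ((x ^ p : ℝ) : ℂ) / (f x * g x)) (𝓝[>] (0:ℝ)) (𝓝 μ⁻¹) := by
    have hfg : Tendsto (fun x => f x * g x / ((x ^ p : ℝ) : ℂ)) (𝓝[>] (0:ℝ)) (𝓝 μ) := by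
      have := hfasym.mul hgasym
      rw [one_mul] at this
      apply this.congr'
      filter_upwards [self_mem_nhdsWithin] with x hx
      have hx0 : (0:ℝ) < x := hx
      have hsplit : (x ^ p : ℝ) = x ^ κ * x ^ (κ+1) := by
        rw [← Real.rpow_add hx0]; congr 1; simp [hp]; ring
      rw [hsplit]
      push_cast
      rw [div_mul_div_comm]
    have := hfg.inv₀ hμ
    apply this.congr
    intro x
    rw [inv_div]
  -- combine
  have hfinal := hA.mul hB
  rw [zero_mul] at hfinal
  apply hfinal.congr'
  filter_upwards [Ioc_mem_nhdsGT hδpos] with x hx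
  have hx0 : (0:ℝ) < x := hx.1
  have hxp : ((x ^ p : ℝ) : ℂ) ≠ 0 := by
    simp only [ne_eq, Complex.ofReal_eq_zero]
    exact ne_of_gt (Real.rpow_pos_of_pos hx0 p)
  field_simp
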